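/- For every n ≥ 2, the QBF QUPARITY_n is false. -/
import Mathlib


/-! Generic framework for QBFs in prenex CNF. -/

inductive Q
  | ex
  | all
deriving DecidableEq

abbrev Lit (V : Type) := V × Bool
abbrev Clause (V : Type) := Finset (Lit V)
abbrev Cnf (V : Type) := Finset (Clause V)
abbrev QPrefix (V : Type) := List (Q × V)

variable {V : Type} [DecidableEq V]

/-- Negation of a literal. -/
def negLit (l : Lit V) : Lit V := (l.1, !l.2)

/-- Evaluation of a literal under an assignment. -/
def evalLit (τ : V → Bool) (l : Lit V) : Bool := if l.2 then τ l.1 else !(τ l.1)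

/-- An assignment satisfies a clause if some literal evaluates to true. -/
def SatClause (τ : V → Bool) (C : Clause V) : Prop := ∃ l ∈ C, evalLit τ l = true

/-- An assignment satisfies a CNF if it satisfies all clauses. -/
def SatCnf (τ : V → Bool) (φ : Cnf V) : Prop := ∀ C ∈ φ, SatClause τ C

/-- Recursive semantics of a quantifier prefix over a matrix predicate. -/
def QTrue : QPrefix V → (V → Bool) → ((V → Bool) → Prop) → Prop
  | [], τ, M => M τ
  | (Q.ex, v) :: P, τ, M => ∃ b, QTrue P (Function.update τ v b) M
  | (Q.all, v) :: P, τ, M => ∀ b, QTrue P (Function.update τ v b) M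

/-- Truth of a prenex CNF QBF (closed; the default assignment is irrelevant). -/
def QBFTrue (P : QPrefix V) (φ : Cnf V) : Prop :=
  QTrue P (fun _ => false) (fun τ => SatCnf τ φ)

/-- Two variables are in the same quantifier block of a prefix. -/
def SameBlock (P : QPrefix V) (v w : V) : Prop :=
  ∃ i j : ℕ, (∃ q : Q, P[i]? = some (q, v)) ∧ (∃ q : Q, P[j]? = some (q, w)) ∧
    ∀ (k₁ k₂ : ℕ) (e₁ e₂ : Q × V), min i j ≤ k₁ → k₁ ≤ k₂ → k₂ ≤ max i j →
      P[k₁]? = some e₁ → P[k₂]? = some e₂ → e₁.1 = e₂.1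

/-- An admissible literal map for a prefix: a bijection on literals commuting with
negation and moving variables only within their quantifier block. -/
structure Admissible (P : QPrefix V) (σ : Lit V → Lit V) : Prop where
  bij : Function.Bijective σ
  neg : ∀ l, σ (negLit l) = negLit (σ l)
  block : ∀ v w b c, σ (v, b) = (w, c) → v ≠ w → SameBlock P v w

/-- Action of a literal map on a clause. -/
def mapClause (σ : Lit V → Lit V) (C : Clause V) : Clause V := C.image σ

/-- A (syntactic) symmetry of a QBF: an admissible map sending the clause set to itself. -/
def IsSymmetry (P : QPrefix V) (φ : Cnf V) (σ : Lit V → Lit V) : Prop :=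
  Admissible P σ ∧ φ.image (mapClause σ) = φ

def IsExist (P : QPrefix V) (v : V) : Prop := (Q.ex, v) ∈ P
def IsUniv (P : QPrefix V) (v : V) : Prop := (Q.all, v) ∈ P

/-- A clause is a tautology if it contains complementary literals. -/
def Tauto (C : Clause V) : Prop := ∃ l ∈ C, negLit l ∈ C

/-- Rule R of Q-Res: resolution over an existential variable, with
non-tautological resolvent. -/
def ResStep (P : QPrefix V) (E₁ E₂ E : Clause V) : Prop :=
  ∃ x, IsExist P x ∧ (x, true) ∈ E₁ ∧ (x, false) ∈ E₂ ∧
    E = E₁.erase (x, true) ∪ E₂.erase (x, false) ∧ ¬ Tauto E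

/-- Prefix order on variables: `v` occurs strictly before `w`. -/
def LtP (P : QPrefix V) (v w : V) : Prop :=
  ∃ i j : ℕ, i < j ∧ (∃ q : Q, P[i]? = some (q, v)) ∧ (∃ q : Q, P[j]? = some (q, w))

/-- Rule U of Q-Res: universal reduction. -/
def URed (P : QPrefix V) (F₁ F : Clause V) : Prop :=
  ∃ l, IsUniv P l.1 ∧ l ∈ F₁ ∧ negLit l ∉ F₁ ∧ F = F₁.erase l ∧
    ∀ k ∈ F₁.erase l, IsExist P k.1 → LtP P k.1 l.1

/-- Derivability in Q-Res (rules A, R, U). -/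
inductive Derives (P : QPrefix V) (φ : Cnf V) : Clause V → Prop
  | ax {C : Clause V} : C ∈ φ → Derives P φ C
  | res {E₁ E₂ E : Clause V} :
      Derives P φ E₁ → Derives P φ E₂ → ResStep P E₁ E₂ E → Derives P φ E
  | ured {F₁ F : Clause V} : Derives P φ F₁ → URed P F₁ F → Derives P φ F

/-- Derivability in Q-Res+S (rules A, R, U, S). -/
inductive DerivesS (P : QPrefix V) (φ : Cnf V) : Clause V → Prop
  | ax {C : Clause V} : C ∈ φ → DerivesS P φ C
  | res {E₁ E₂ E : Clause V} :
      DerivesS P φ E₁ → DerivesS P φ E₂ → ResStep P E₁ E₂ E → DerivesS P φ E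
  | ured {F₁ F : Clause V} : DerivesS P φ F₁ → URed P F₁ F → DerivesS P φ F
  | sym {C : Clause V} {σ : Lit V → Lit V} :
      DerivesS P φ C → IsSymmetry P φ σ → DerivesS P φ (mapClause σ C)

/-- A clause available at step `i` of a derivation sequence: an input clause
(axiom rule A, not counted as a step) or an earlier line. -/
def Avail (φ : Cnf V) (D : List (Clause V)) (i : ℕ) (C : Clause V) : Prop :=
  C ∈ φ ∨ ∃ j, ∃ _ : j < i, ∃ hj : j < D.length, D[j]'hj = C

/-- Line `C` at position `i` is justified by rule R or U from available clauses. -/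
def StepOK (P : QPrefix V) (φ : Cnf V) (D : List (Clause V)) (i : ℕ) (C : Clause V) : Prop :=
  (∃ E₁ E₂, Avail φ D i E₁ ∧ Avail φ D i E₂ ∧ ResStep P E₁ E₂ C) ∨
  (∃ F₁, Avail φ D i F₁ ∧ URed P F₁ C)

/-- Line justified by rule R, U or the symmetry rule S. -/
def StepOKS (P : QPrefix V) (φ : Cnf V) (D : List (Clause V)) (i : ℕ) (C : Clause V) : Prop :=
  StepOK P φ D i C ∨
  (∃ F₁ σ, Avail φ D i F₁ ∧ IsSymmetry P φ σ ∧ C = mapClause σ F₁)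

/-- A Q-Res refutation, as a sequence of R/U steps ending in the empty clause;
its length is the number of R and U applications. -/
def IsRefutation (P : QPrefix V) (φ : Cnf V) (D : List (Clause V)) : Prop :=
  (∀ i (hi : i < D.length), StepOK P φ D i (D[i]'hi)) ∧ D.getLast? = some (∅ : Clause V)

/-- A Q-Res+S refutation. -/
def IsRefutationS (P : QPrefix V) (φ : Cnf V) (D : List (Clause V)) : Prop :=
  (∀ i (hi : i < D.length), StepOKS P φ D i (D[i]'hi)) ∧ D.getLast? = some (∅ : Clause V)

/-- A derivation sequence using rules A, R, U: every line is an input clause or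
follows from earlier lines by R or U. -/
def IsDerivation (P : QPrefix V) (φ : Cnf V) (D : List (Clause V)) : Prop :=
  ∀ i (hi : i < D.length), (D[i]'hi) ∈ φ ∨
    (∃ j k, ∃ hj : j < i, ∃ hk : k < i,
      ResStep P (D[j]'(Nat.lt_trans hj hi)) (D[k]'(Nat.lt_trans hk hi)) (D[i]'hi)) ∨
    (∃ j, ∃ hj : j < i, URed P (D[j]'(Nat.lt_trans hj hi)) (D[i]'hi))

/-! The KBKF formula family (variables indexed 1..n). -/

inductive KV
  | x (i : ℕ)
  | y (i : ℕ)
  | a (i : ℕ)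
  | z (i : ℕ)
deriving DecidableEq

/-- Prefix ∃x₁y₁∀a₁ … ∃xₙyₙ∀aₙ ∃z₁…zₙ. -/
def kPrefix (n : ℕ) : QPrefix KV :=
  ((List.range n).flatMap
    (fun j => [(Q.ex, KV.x (j+1)), (Q.ex, KV.y (j+1)), (Q.all, KV.a (j+1))])) ++
  (List.range n).map (fun j => (Q.ex, KV.z (j+1)))

/-- The tail z̄₁ ∨ … ∨ z̄ₙ. -/
def kZneg (n : ℕ) : Clause KV := (Finset.range n).image (fun j => ((KV.z (j+1), false) : Lit KV))

/-- The clauses of KBKF_n. -/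
def kbkf (n : ℕ) : Cnf KV :=
  {({(KV.x 1, false), (KV.y 1, false)} : Clause KV)} ∪
  ((Finset.range (n-1)).image (fun j =>
    ({(KV.x (j+1), true), (KV.a (j+1), false), (KV.x (j+2), false), (KV.y (j+2), false)} : Clause KV))) ∪
  ((Finset.range (n-1)).image (fun j =>
    ({(KV.y (j+1), true), (KV.a (j+1), true), (KV.x (j+2), false), (KV.y (j+2), false)} : Clause KV))) ∪
  {({(KV.x n, true), (KV.a n, false)} : Clause KV) ∪ kZneg n,
   ({(KV.y n, true), (KV.a n, true)} : Clause KV) ∪ kZneg n} ∪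
  ((Finset.range n).image (fun j => ({(KV.a (j+1), true), (KV.z (j+1), true)} : Clause KV))) ∪
  ((Finset.range n).image (fun j => ({(KV.a (j+1), false), (KV.z (j+1), true)} : Clause KV)))

/-- The symmetry σᵢ = (xᵢ yᵢ)(x̄ᵢ ȳᵢ)(aᵢ āᵢ) of KBKF_n. -/
def kSigma (i : ℕ) : Lit KV → Lit KV
  | (KV.x j, b) => if j = i then (KV.y j, b) else (KV.x j, b)
  | (KV.y j, b) => if j = i then (KV.x j, b) else (KV.y j, b)
  | (KV.a j, b) => if j = i then (KV.a j, !b) else (KV.a j, b)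
  | (KV.z j, b) => (KV.z j, b)

/-- The symmetry breaker ψₙ = (x̄₁∨y₁) ∧ … ∧ (x̄ₙ∨yₙ) for KBKF_n. -/
def kPsi (n : ℕ) : Cnf KV :=
  (Finset.range n).image (fun j => ({(KV.x (j+1), false), (KV.y (j+1), true)} : Clause KV))

/-! The QUPARITY formula family. -/

inductive PV
  | x (i : ℕ)
  | a (i : ℕ)
  | y (i : ℕ)
deriving DecidableEq

/-- Prefix ∃x₁…xₙ ∀a₁a₂ ∃y₂…yₙ. -/
def pPrefix (n : ℕ) : QPrefix PV :=
  (List.range n).map (fun j => ((Q.ex, PV.x (j+1)) : Q × PV)) ++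
  [(Q.all, PV.a 1), (Q.all, PV.a 2)] ++
  (List.range (n-1)).map (fun k => ((Q.ex, PV.y (k+2)) : Q × PV))

/-- a₁ ∨ a₂ with sign `s` (s = true: unprimed clauses, s = false: primed clauses). -/
def pAA (s : Bool) : Clause PV := {(PV.a 1, s), (PV.a 2, s)}

/-- The clauses of QUPARITY_n. -/
def quparity (n : ℕ) : Cnf PV :=
  ((Finset.univ : Finset Bool).biUnion (fun s =>
    ({({(PV.x 1, false), (PV.x 2, false), (PV.y 2, false)} : Clause PV) ∪ pAA s,
      ({(PV.x 1, false), (PV.x 2, true), (PV.y 2, true)} : Clause PV) ∪ pAA s,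
      ({(PV.x 1, true), (PV.x 2, false), (PV.y 2, true)} : Clause PV) ∪ pAA s,
      ({(PV.x 1, true), (PV.x 2, true), (PV.y 2, false)} : Clause PV) ∪ pAA s} : Cnf PV) ∪
    ((Finset.range (n-2)).biUnion (fun k =>
      ({({(PV.y (k+2), false), (PV.x (k+3), false), (PV.y (k+3), false)} : Clause PV) ∪ pAA s,
        ({(PV.y (k+2), false), (PV.x (k+3), true), (PV.y (k+3), true)} : Clause PV) ∪ pAA s,
        ({(PV.y (k+2), true), (PV.x (k+3), false), (PV.y (k+3), true)} : Clause PV) ∪ pAA s,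
        ({(PV.y (k+2), true), (PV.x (k+3), true), (PV.y (k+3), false)} : Clause PV) ∪ pAA s} : Cnf PV))))) ∪
  {({(PV.a 1, true), (PV.a 2, true), (PV.y n, true)} : Clause PV),
   ({(PV.a 1, false), (PV.a 2, false), (PV.y n, false)} : Clause PV)}

/-- The symmetry σ₁ = (x₁ x₂)(x̄₁ x̄₂) of QUPARITY_n. -/
def pSigma1 : Lit PV → Lit PV
  | (PV.x 1, b) => (PV.x 2, b)
  | (PV.x 2, b) => (PV.x 1, b)
  | l => l

/-- The symmetry σᵢ = (xᵢ x̄ᵢ)(a₁ ā₁)(a₂ ā₂)(yᵢ ȳᵢ)⋯(yₙ ȳₙ) of QUPARITY_n, 2 ≤ i ≤ n. -/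
def pSigma (n i : ℕ) : Lit PV → Lit PV
  | (PV.x j, b) => if j = i then (PV.x j, !b) else (PV.x j, b)
  | (PV.a j, b) => if j = 1 ∨ j = 2 then (PV.a j, !b) else (PV.a j, b)
  | (PV.y j, b) => if i ≤ j ∧ j ≤ n then (PV.y j, !b) else (PV.y j, b)

/-- The symmetry breaker ψₙ = (x̄₁ ∨ x₂) ∧ x̄₂ ∧ … ∧ x̄ₙ for QUPARITY_n. -/
def pPsi (n : ℕ) : Cnf PV :=
  {({(PV.x 1, false), (PV.x 2, true)} : Clause PV)} ∪
  (Finset.range (n-1)).image (fun k => ({(PV.x (k+2), false)} : Clause PV))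

/-! The modified family KBKF'_n with blocking universal variables b_j. -/

inductive KV2
  | x (i : ℕ)
  | b (i : ℕ)
  | y (i : ℕ)
  | a (i : ℕ)
  | z (i : ℕ)
deriving DecidableEq

/-- Prefix ∃x₁∀b₁∃y₁∀a₁ … ∃xₙ∀bₙ∃yₙ∀aₙ ∃z₁…zₙ of KBKF'_n. -/
def k2Prefix (n : ℕ) : QPrefix KV2 :=
  ((List.range n).flatMap
    (fun j => [(Q.ex, KV2.x (j+1)), (Q.all, KV2.b (j+1)),
               (Q.ex, KV2.y (j+1)), (Q.all, KV2.a (j+1))])) ++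
  (List.range n).map (fun j => (Q.ex, KV2.z (j+1)))

/-- The map σᵢ = (xᵢ yᵢ)(x̄ᵢ ȳᵢ)(aᵢ āᵢ) on the literals of KBKF'_n. -/
def k2Sigma (i : ℕ) : Lit KV2 → Lit KV2
  | (KV2.x j, c) => if j = i then (KV2.y j, c) else (KV2.x j, c)
  | (KV2.y j, c) => if j = i then (KV2.x j, c) else (KV2.y j, c)
  | (KV2.a j, c) => if j = i then (KV2.a j, !c) else (KV2.a j, c)
  | (KV2.b j, c) => (KV2.b j, c)
  | (KV2.z j, c) => (KV2.z j, c)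

/-! Auxiliary machinery for the QUPARITY falsity proof. -/

section QAux
variable {V : Type} [DecidableEq V]

/-- Update an assignment on all variables in a list, using `g`. -/
def updL (τ : V → Bool) (L : List V) (g : V → Bool) : V → Bool :=
  fun v => if v ∈ L then g v else τ v

lemma updL_nil (τ : V → Bool) (g : V → Bool) : updL τ [] g = τ := by
  funext v; simp [updL]

lemma updL_cons_eq (τ : V → Bool) (h : V) (b : Bool) (t : List V) (g : V → Bool) :
    updL (Function.update τ h b) t g
      = updL τ (h :: t) (fun v => if v = h ∧ v ∉ t then b else g v) := by
  funext v
  by_cases hv : v ∈ t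
  · simp [updL, hv]
  · by_cases hvh : v = h
    · subst hvh; simp [updL, hv]
    · simp [updL, hv, hvh, Function.update_of_ne hvh]

lemma updL_cons_eq' (τ : V → Bool) (h : V) (t : List V) (g : V → Bool) :
    updL τ (h :: t) g = updL (Function.update τ h (g h)) t g := by
  funext v
  by_cases hv : v ∈ t
  · simp [updL, hv]
  · by_cases hvh : v = h
    · subst hvh; simp [updL, hv]
    · simp [updL, hv, hvh, Function.update_of_ne hvh]

lemma qtrue_ex_block (L : List V) (P : QPrefix V) (τ : V → Bool)
    (M : (V → Bool) → Prop) :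
    QTrue (L.map (fun v => (Q.ex, v)) ++ P) τ M ↔ ∃ g, QTrue P (updL τ L g) M := by
  induction L generalizing τ with
  | nil =>
    simp only [List.map_nil, List.nil_append]
    constructor
    · intro h; exact ⟨fun _ => false, by rwa [updL_nil]⟩
    · rintro ⟨g, h⟩; rwa [updL_nil] at h
  | cons hd t ih =>
    simp only [List.map_cons, List.cons_append, QTrue]
    constructor
    · rintro ⟨b, h⟩
      rcases (ih _).1 h with ⟨g, hg⟩
      exact ⟨_, by rwa [updL_cons_eq] at hg⟩
    · rintro ⟨g, hg⟩
      exact ⟨g hd, (ih _).2 ⟨g, by rwa [updL_cons_eq'] at hg⟩⟩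

lemma qtrue_all_block (L : List V) (P : QPrefix V) (τ : V → Bool)
    (M : (V → Bool) → Prop) :
    QTrue (L.map (fun v => (Q.all, v)) ++ P) τ M ↔ ∀ g, QTrue P (updL τ L g) M := by
  induction L generalizing τ with
  | nil =>
    simp only [List.map_nil, List.nil_append]
    constructor
    · intro h g; rwa [updL_nil]
    · intro h; have := h (fun _ => false); rwa [updL_nil] at this
  | cons hd t ih =>
    simp only [List.map_cons, List.cons_append, QTrue]
    constructor
    · intro h g
      rw [updL_cons_eq']
      exact (ih _).1 (h (g hd)) g
    · intro h b
      refine (ih _).2 (fun g => ?_)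
      rw [updL_cons_eq]
      exact h _

end QAux

/-- Parity of x₁,…,x_j under τ. -/
def pvPar (τ : PV → Bool) : ℕ → Bool
  | 0 => false
  | j+1 => Bool.xor (pvPar τ j) (τ (PV.x (j+1)))

lemma pvPar_congr {τ τ' : PV → Bool} (h : ∀ i, τ (PV.x i) = τ' (PV.x i)) :
    ∀ j, pvPar τ j = pvPar τ' j
  | 0 => rfl
  | j+1 => by simp [pvPar, pvPar_congr h j, h]

/-- Membership of the base XOR clauses in quparity. -/
lemma base_mem {n : ℕ} (hn : 2 ≤ n) (s b1 b2 : Bool) :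
    ({(PV.x 1, b1), (PV.x 2, b2), (PV.y 2, Bool.xor b1 b2)} : Clause PV) ∪ pAA s
      ∈ quparity n := by
  unfold quparity
  apply Finset.mem_union_left
  refine Finset.mem_biUnion.2 ⟨s, Finset.mem_univ s, Finset.mem_union_left _ ?_⟩
  cases b1 <;> cases b2
  · exact Finset.mem_insert_self _ _
  · exact Finset.mem_insert_of_mem (Finset.mem_insert_self _ _)
  · exact Finset.mem_insert_of_mem (Finset.mem_insert_of_mem (Finset.mem_insert_self _ _))
  · exact Finset.mem_insert_of_mem (Finset.mem_insert_of_mem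
      (Finset.mem_insert_of_mem (Finset.mem_singleton_self _)))

/-- Membership of the step XOR clauses in quparity. -/
lemma step_mem {n k : ℕ} (hk : k < n - 2) (s b1 b2 : Bool) :
    ({(PV.y (k+2), b1), (PV.x (k+3), b2), (PV.y (k+3), Bool.xor b1 b2)} : Clause PV) ∪ pAA s
      ∈ quparity n := by
  unfold quparity
  apply Finset.mem_union_left
  refine Finset.mem_biUnion.2 ⟨s, Finset.mem_univ s, Finset.mem_union_right _
    (Finset.mem_biUnion.2 ⟨k, Finset.mem_range.2 hk, ?_⟩)⟩
  cases b1 <;> cases b2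
  · exact Finset.mem_insert_self _ _
  · exact Finset.mem_insert_of_mem (Finset.mem_insert_self _ _)
  · exact Finset.mem_insert_of_mem (Finset.mem_insert_of_mem (Finset.mem_insert_self _ _))
  · exact Finset.mem_insert_of_mem (Finset.mem_insert_of_mem
      (Finset.mem_insert_of_mem (Finset.mem_singleton_self _)))

lemma e1_mem (n : ℕ) :
    ({(PV.a 1, true), (PV.a 2, true), (PV.y n, true)} : Clause PV) ∈ quparity n := by
  unfold quparity
  exact Finset.mem_union_right _ (Finset.mem_insert_self _ _)

lemma e2_mem (n : ℕ) :
    ({(PV.a 1, false), (PV.a 2, false), (PV.y n, false)} : Clause PV) ∈ quparity n := by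
  unfold quparity
  exact Finset.mem_union_right _ (Finset.mem_insert_of_mem (Finset.mem_singleton_self _))

/-- XOR extraction from the four clauses of a block. -/
lemma xor_of_sat {τ : PV → Bool} {s0 : Bool} {u v w : PV}
    (ha1 : τ (PV.a 1) = s0) (ha2 : τ (PV.a 2) = s0)
    (h : ∀ b1 b2 : Bool,
      SatClause τ (({(u, b1), (v, b2), (w, Bool.xor b1 b2)} : Clause PV) ∪ pAA (!s0))) :
    τ w = Bool.xor (τ u) (τ v) := by
  have h' := h (!(τ u)) (!(τ v))
  simp only [SatClause, pAA, Finset.mem_union, Finset.mem_insert, Finset.mem_singleton] at h'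
  obtain ⟨l, hl, hev⟩ := h'
  rcases hl with (h1 | h1 | h1) | h1 | h1 <;> rw [h1] at hev <;>
    cases hu : τ u <;> cases hv : τ v <;> cases hs : s0 <;> simp_all [evalLit]

/-- Key invariant: under constant a-assignment, y_j equals the parity of x₁..x_j. -/
lemma y_eq_par {n : ℕ} (hn : 2 ≤ n) {τ : PV → Bool} {s0 : Bool}
    (hsat : SatCnf τ (quparity n))
    (ha1 : τ (PV.a 1) = s0) (ha2 : τ (PV.a 2) = s0) :
    ∀ j, 2 ≤ j → j ≤ n → τ (PV.y j) = pvPar τ j := by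
  intro j hj2
  induction j, hj2 using Nat.le_induction with
  | base =>
    intro _
    have h2 := xor_of_sat (u := PV.x 1) (v := PV.x 2) (w := PV.y 2) ha1 ha2
      (fun b1 b2 => hsat _ (base_mem hn (!s0) b1 b2))
    simp [pvPar, h2]
  | succ j hj ih =>
    intro hjn
    have hjn' : j ≤ n := Nat.le_of_succ_le hjn
    have hk : j - 2 < n - 2 := by omega
    have h2 := xor_of_sat (u := PV.y (j-2+2)) (v := PV.x (j-2+3)) (w := PV.y (j-2+3)) ha1 ha2
      (fun b1 b2 => hsat _ (step_mem hk (!s0) b1 b2))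
    have e2 : j - 2 + 2 = j := by omega
    have e3 : j - 2 + 3 = j + 1 := by omega
    rw [e2, e3] at h2
    rw [h2, ih hjn']
    simp [pvPar]

/-- QUPARITY_n is false for every n ≥ 2. -/
theorem quparity_false : ∀ n : ℕ, 2 ≤ n → ¬ QBFTrue (pPrefix n) (quparity n) := by
  intro n hn h
  classical
  set LX : List PV := (List.range n).map (fun j => PV.x (j+1)) with hLX
  set LA : List PV := [PV.a 1, PV.a 2] with hLA
  set LY : List PV := (List.range (n-1)).map (fun k => PV.y (k+2)) with hLY
  have hP : pPrefix n = LX.map (fun v => (Q.ex, v)) ++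
      (LA.map (fun v => (Q.all, v)) ++ LY.map (fun v => (Q.ex, v))) := by
    simp only [pPrefix, hLX, hLA, hLY, List.map_map, List.append_assoc, List.cons_append,
      List.nil_append]
    rfl
  rw [QBFTrue, hP, qtrue_ex_block] at h
  obtain ⟨gx, h⟩ := h
  rw [qtrue_all_block] at h
  have hf := h (fun _ => false)
  have ht := h (fun _ => true)
  rw [← List.append_nil (LY.map (fun v => ((Q.ex, v) : Q × PV))), qtrue_ex_block] at hf ht
  obtain ⟨gyf, hf⟩ := hf
  obtain ⟨gyt, ht⟩ := ht
  set τf := updL (updL (updL (fun _ => false) LX gx) LA (fun _ => false)) LY gyf with hτf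
  set τt := updL (updL (updL (fun _ => false) LX gx) LA (fun _ => true)) LY gyt with hτt
  have hsatf : SatCnf τf (quparity n) := hf
  have hsatt : SatCnf τt (quparity n) := ht
  have hxa : ∀ i, τf (PV.x i) = τt (PV.x i) := by
    intro i; simp [hτf, hτt, updL, hLY, hLA]
  have ha1f : τf (PV.a 1) = false := by simp [hτf, updL, hLY, hLA]
  have ha2f : τf (PV.a 2) = false := by simp [hτf, updL, hLY, hLA]
  have ha1t : τt (PV.a 1) = true := by simp [hτt, updL, hLY, hLA]
  have ha2t : τt (PV.a 2) = true := by simp [hτt, updL, hLY, hLA]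
  have hyf : τf (PV.y n) = pvPar τf n := y_eq_par hn hsatf ha1f ha2f n hn le_rfl
  have hyt : τt (PV.y n) = pvPar τt n := y_eq_par hn hsatt ha1t ha2t n hn le_rfl
  have he1 := hsatf _ (e1_mem n)
  have he2 := hsatt _ (e2_mem n)
  simp only [SatClause, Finset.mem_insert, Finset.mem_singleton] at he1 he2
  obtain ⟨l1, hl1, hev1⟩ := he1
  obtain ⟨l2, hl2, hev2⟩ := he2
  have hynf : τf (PV.y n) = true := by
    rcases hl1 with rfl | rfl | rfl <;> simp_all [evalLit]
  have hynt : τt (PV.y n) = false := by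
    rcases hl2 with rfl | rfl | rfl <;> simp_all [evalLit]
  have := pvPar_congr hxa n
  rw [hynf] at hyf
  rw [hynt] at hyt
  rw [← hyf, ← hyt] at this
  exact absurd this (by simp)
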